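/- For a subset u ⊆ {1,…,d}, the variance of the conditional expectation of f̂ given the coordinates outside u satisfies var(E(f̂ | x_r, r ∉ u)) = Σ_{j=1}^n Σ_{i=1}^n β_j β_i e^{b_j + b_i} ( ∏_{l ∈ u} ε(w_{j,l}) ε(w_{i,l}) ) ( ∏_{r ∉ u} ε(w_{j,r} + w_{i,r}) ) − (E(f̂))². -/

import Mathlib

open MeasureTheory Real

/-- The function ε(t) = (e^t − 1)/t for t ≠ 0, and ε(0) = 1. -/
noncomputable def eps (t : ℝ) : ℝ := if t = 0 then 1 else (Real.exp t - 1) / t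

/-- ELM surrogate with exponential activation:
`f̂(x) = Σ_{j=1}^n β_j exp(w_jᵀ x + b_j)`. -/
noncomputable def elm {d n : ℕ} (β b : Fin n → ℝ) (w : Fin n → Fin d → ℝ)
    (x : Fin d → ℝ) : ℝ :=
  ∑ j, β j * Real.exp ((∑ l, w j l * x l) + b j)


/-- Conditional expectation of `f` given the coordinates in `v`:
the integral of `f` over the coordinates outside `v`, with the coordinates in `v`
fixed to those of `x`. -/
noncomputable def condExp {d : ℕ} (f : (Fin d → ℝ) → ℝ) (v : Finset (Fin d))
    (x : Fin d → ℝ) : ℝ :=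
  ∫ y in Set.Icc (0 : Fin d → ℝ) 1, f (fun l => if l ∈ v then x l else y l)

lemma eps_zero : eps 0 = 1 := by simp [eps]

lemma int_exp_one (c : ℝ) : ∫ t in Set.Icc (0:ℝ) 1, Real.exp (c * t) = eps c := by
  rw [integral_Icc_eq_integral_Ioc, ← intervalIntegral.integral_of_le zero_le_one]
  by_cases hc : c = 0
  · simp [hc, eps]
  · rw [intervalIntegral.integral_comp_mul_left (fun s => Real.exp s) hc]
    simp [integral_exp, eps, hc, smul_eq_mul, div_eq_inv_mul]

lemma int_exp_cube {d : ℕ} (c : Fin d → ℝ) :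
    ∫ x in Set.Icc (0 : Fin d → ℝ) 1, Real.exp (∑ l, c l * x l) = ∏ l, eps (c l) := by
  rw [← integral_indicator measurableSet_Icc]
  have h : ∀ x : Fin d → ℝ,
      (Set.Icc (0 : Fin d → ℝ) 1).indicator (fun x => Real.exp (∑ l, c l * x l)) x
      = ∏ l, (Set.Icc (0:ℝ) 1).indicator (fun t => Real.exp (c l * t)) (x l) := by
    intro x
    by_cases hx : x ∈ Set.Icc (0 : Fin d → ℝ) 1
    · rw [Set.indicator_of_mem hx, Real.exp_sum]
      refine Finset.prod_congr rfl fun l _ =>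
        (Set.indicator_of_mem ?_ (fun t => Real.exp (c l * t))).symm
      rw [Set.mem_Icc] at hx
      exact Set.mem_Icc.2 ⟨hx.1 l, hx.2 l⟩
    · rw [Set.indicator_of_notMem hx]
      rw [Set.mem_Icc, Pi.le_def, Pi.le_def] at hx
      push_neg at hx
      rcases (em (∀ l, (0:ℝ) ≤ x l)) with h0 | h0
      · obtain ⟨l, hl⟩ := hx h0
        refine (Finset.prod_eq_zero (Finset.mem_univ l) ?_).symm
        rw [Set.indicator_of_notMem]
        simp only [Set.mem_Icc, not_and_or]
        right; simpa using hl
      · push_neg at h0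
        obtain ⟨l, hl⟩ := h0
        refine (Finset.prod_eq_zero (Finset.mem_univ l) ?_).symm
        rw [Set.indicator_of_notMem]
        simp only [Set.mem_Icc, not_and_or]
        left; simpa using hl
  simp_rw [h]
  rw [MeasureTheory.integral_fintype_prod_volume_eq_prod
    (f := fun l t => (Set.Icc (0:ℝ) 1).indicator (fun s => Real.exp (c l * s)) t)]
  refine Finset.prod_congr rfl fun l _ => ?_
  rw [integral_indicator measurableSet_Icc, int_exp_one]

lemma int_sum {d : ℕ} {ι : Type*} [Fintype ι] (A : ι → ℝ) (c : ι → Fin d → ℝ) :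
    (∫ x in Set.Icc (0 : Fin d → ℝ) 1, ∑ j, A j * Real.exp (∑ l, c j l * x l))
      = ∑ j, A j * ∏ l, eps (c j l) := by
  rw [integral_finset_sum]
  · exact Finset.sum_congr rfl fun j _ => by rw [integral_const_mul, int_exp_cube]
  · intro j _
    apply ContinuousOn.integrableOn_compact isCompact_Icc
    exact Continuous.continuousOn (by fun_prop)

lemma prod_eps_ite {d : ℕ} (s : Finset (Fin d)) (v : Fin d → ℝ) :
    ∏ l, eps (if l ∈ s then v l else 0) = ∏ l ∈ s, eps (v l) := by
  rw [← Finset.prod_mul_prod_compl s (fun l => eps (if l ∈ s then v l else 0))]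
  have h1 : ∏ l ∈ s, eps (if l ∈ s then v l else 0) = ∏ l ∈ s, eps (v l) :=
    Finset.prod_congr rfl fun l hl => by rw [if_pos hl]
  have h2 : ∏ l ∈ sᶜ, eps (if l ∈ s then v l else 0) = 1 :=
    Finset.prod_eq_one fun l hl => by
      rw [if_neg (Finset.mem_compl.1 hl), eps_zero]
  rw [h1, h2, mul_one]

lemma condExp_elm_eq {d n : ℕ} (β b : Fin n → ℝ) (w : Fin n → Fin d → ℝ)
    (u : Finset (Fin d)) (x : Fin d → ℝ) :
    condExp (elm β b w) uᶜ x
      = ∑ j, (β j * Real.exp (b j) * ∏ l ∈ u, eps (w j l)) *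
          Real.exp (∑ l, (if l ∈ uᶜ then w j l else 0) * x l) := by
  unfold _root_.condExp elm
  have key : ∀ y : Fin d → ℝ,
      (∑ j, β j * Real.exp ((∑ l, w j l * (if l ∈ uᶜ then x l else y l)) + b j))
      = ∑ j, (β j * Real.exp ((∑ l, (if l ∈ uᶜ then w j l else 0) * x l) + b j)) *
          Real.exp (∑ l, (if l ∈ u then w j l else 0) * y l) := by
    intro y
    refine Finset.sum_congr rfl fun j _ => ?_
    have hE : (∑ l, w j l * (if l ∈ uᶜ then x l else y l))
        = (∑ l, (if l ∈ uᶜ then w j l else 0) * x l)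
          + ∑ l, (if l ∈ u then w j l else 0) * y l := by
      rw [← Finset.sum_add_distrib]
      refine Finset.sum_congr rfl fun l _ => ?_
      by_cases hl : l ∈ u <;> simp [hl, Finset.mem_compl]
    rw [hE, add_right_comm, Real.exp_add, mul_assoc]
  simp_rw [key]
  rw [int_sum]
  refine Finset.sum_congr rfl fun j _ => ?_
  rw [prod_eps_ite, Real.exp_add]
  ring

lemma int_condExp {d n : ℕ} (β b : Fin n → ℝ) (w : Fin n → Fin d → ℝ)
    (u : Finset (Fin d)) :
    (∫ x in Set.Icc (0 : Fin d → ℝ) 1, condExp (elm β b w) uᶜ x)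
      = ∑ j, β j * Real.exp (b j) * ∏ l, eps (w j l) := by
  simp_rw [condExp_elm_eq]
  rw [int_sum]
  refine Finset.sum_congr rfl fun j _ => ?_
  rw [prod_eps_ite, ← Finset.prod_mul_prod_compl u (fun l => eps (w j l))]
  ring

lemma int_elm {d n : ℕ} (β b : Fin n → ℝ) (w : Fin n → Fin d → ℝ) :
    (∫ x in Set.Icc (0 : Fin d → ℝ) 1, elm β b w x)
      = ∑ j, β j * Real.exp (b j) * ∏ l, eps (w j l) := by
  have h : ∀ x : Fin d → ℝ, elm β b w x
      = ∑ j, (β j * Real.exp (b j)) * Real.exp (∑ l, w j l * x l) := by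
    intro x
    exact Finset.sum_congr rfl fun j _ => by rw [Real.exp_add]; ring
  simp_rw [h]
  rw [int_sum]

lemma int_condExp_sq {d n : ℕ} (β b : Fin n → ℝ) (w : Fin n → Fin d → ℝ)
    (u : Finset (Fin d)) :
    (∫ x in Set.Icc (0 : Fin d → ℝ) 1, (condExp (elm β b w) uᶜ x) ^ 2)
      = ∑ j, ∑ i, β j * β i * Real.exp (b j + b i) *
          (∏ l ∈ u, eps (w j l) * eps (w i l)) *
          ∏ r ∈ uᶜ, eps (w j r + w i r) := by
  set A : Fin n → ℝ := fun j => β j * Real.exp (b j) * ∏ l ∈ u, eps (w j l) with hA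
  set cc : Fin n → Fin d → ℝ := fun j l => if l ∈ uᶜ then w j l else 0 with hcc
  have hsq : ∀ x : Fin d → ℝ, (condExp (elm β b w) uᶜ x) ^ 2
      = ∑ p : Fin n × Fin n, (A p.1 * A p.2) *
          Real.exp (∑ l, (cc p.1 l + cc p.2 l) * x l) := by
    intro x
    rw [condExp_elm_eq, sq, Finset.sum_mul_sum, Fintype.sum_prod_type]
    refine Finset.sum_congr rfl fun j _ => Finset.sum_congr rfl fun i _ => ?_
    have : (∑ l, (cc j l + cc i l) * x l)
        = (∑ l, cc j l * x l) + ∑ l, cc i l * x l := by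
      rw [← Finset.sum_add_distrib]
      exact Finset.sum_congr rfl fun l _ => by ring
    rw [this, Real.exp_add]
    ring
  simp_rw [hsq]
  rw [int_sum, Fintype.sum_prod_type]
  refine Finset.sum_congr rfl fun j _ => Finset.sum_congr rfl fun i _ => ?_
  have h1 : ∀ l, cc j l + cc i l = if l ∈ uᶜ then w j l + w i l else 0 := by
    intro l; simp only [hcc]
    by_cases hl : l ∈ uᶜ
    · rw [if_pos hl, if_pos hl, if_pos hl]
    · rw [if_neg hl, if_neg hl, if_neg hl, add_zero]
  simp_rw [h1]
  rw [prod_eps_ite]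
  simp only [hA, Real.exp_add, Finset.prod_mul_distrib]
  ring


/-- For a subset `u ⊆ {1,…,d}`, the variance of the conditional expectation of the
ELM surrogate given the coordinates outside `u` satisfies
`var(E(f̂ | x_r, r ∉ u)) = Σ_j Σ_i β_j β_i e^{b_j+b_i}
  (∏_{l∈u} ε(w_{j,l}) ε(w_{i,l})) (∏_{r∉u} ε(w_{j,r}+w_{i,r})) − (E(f̂))²`. -/
theorem elm_var_condExp_complement (d n : ℕ) (hd : 0 < d) (hn : 0 < n)
    (β b : Fin n → ℝ) (w : Fin n → Fin d → ℝ) (u : Finset (Fin d)) :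
    (∫ x in Set.Icc (0 : Fin d → ℝ) 1, (condExp (elm β b w) uᶜ x) ^ 2) -
        (∫ x in Set.Icc (0 : Fin d → ℝ) 1, condExp (elm β b w) uᶜ x) ^ 2 =
      (∑ j, ∑ i, β j * β i * Real.exp (b j + b i) *
          (∏ l ∈ u, eps (w j l) * eps (w i l)) *
          ∏ r ∈ uᶜ, eps (w j r + w i r)) -
        (∫ x in Set.Icc (0 : Fin d → ℝ) 1, elm β b w x) ^ 2 := by
  rw [int_condExp_sq, int_condExp, int_elm]
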